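/- Let Γ = (ω^ω, E) be a graph on the Baire space with E closed in ω^ω × ω^ω, 𝔭 a coloring with 𝔭(η) depending only on η(0), and G = G(Γ, 𝔭). Then the restriction homomorphisms π_n : G → G_n (0 < n < ω) jointly separate points: for every g ∈ G with g ≠ e there exists 0 < n < ω such that π_n(g) ≠ e; equivalently, ⋂_{0 < n < ω} ker(π_n) = {e}. -/

import Mathlib

/-- The defining relations of the graph product of cyclic groups `G(Γ, 𝔭)`:
for each vertex `a` the relation `a ^ 𝔭(a) = 1` (where the value `𝔭(a) = 0`
encodes `∞`, i.e. no relation), and for each edge `a E b` the commutator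
relation `a b a⁻¹ b⁻¹ = 1`. -/
def graphProdRels {V : Type*} (E : V → V → Prop) (p : V → ℕ) : Set (FreeGroup V) :=
  {w | ∃ a : V, w = FreeGroup.of a ^ p a} ∪
  {w | ∃ a b : V, E a b ∧
    w = FreeGroup.of a * FreeGroup.of b * (FreeGroup.of a)⁻¹ * (FreeGroup.of b)⁻¹}

/-- The graph product of cyclic groups `G(Γ, 𝔭)`. -/
abbrev GraphProd {V : Type*} (E : V → V → Prop) (p : V → ℕ) : Type _ :=
  PresentedGroup (graphProdRels E p)

/-- The generator of `G(Γ, 𝔭)` corresponding to the vertex `v`. -/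
def GraphProd.gen {V : Type*} (E : V → V → Prop) (p : V → ℕ) (v : V) : GraphProd E p :=
  PresentedGroup.of v

/-- The restriction `η ↾ n ∈ ω^n` of `η ∈ ω^ω`. -/
def res (n : ℕ) (η : ℕ → ℕ) : Fin n → ℕ := fun i => η i

/-- The edge relation `E_n` on `ω^n`: two sequences are adjacent iff they have
`E`-adjacent extensions in the Baire space. -/
def En (E : (ℕ → ℕ) → (ℕ → ℕ) → Prop) (n : ℕ) : (Fin n → ℕ) → (Fin n → ℕ) → Prop :=
  fun η ν => ∃ η' ν' : ℕ → ℕ, E η' ν' ∧ res n η' = η ∧ res n ν' = ν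

/-- The coloring `𝔭_n` on `ω^n`, given by `𝔭_n(η) = 𝔭(η')` for an extension
`η'` of `η` (well defined for `n ≥ 1` when `𝔭(η)` depends only on `η(0)`). -/
def pn (p : (ℕ → ℕ) → ℕ) (n : ℕ) : (Fin n → ℕ) → ℕ :=
  fun η => p fun k => if h : k < n then η ⟨k, h⟩ else 0


/-- Closedness of `E` gives, for each pair `(a, b)`, a level `m` separating
disequality and non-adjacency. -/
lemma exists_sep (E : (ℕ → ℕ) → (ℕ → ℕ) → Prop)
    (hEclosed : IsClosed {q : (ℕ → ℕ) × (ℕ → ℕ) | E q.1 q.2}) (a b : ℕ → ℕ) :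
    ∃ m : ℕ, (a ≠ b → ∃ i < m, a i ≠ b i) ∧
      (¬ E a b → ∀ η' ν' : ℕ → ℕ, (∀ i < m, η' i = a i) → (∀ i < m, ν' i = b i) →
        ¬ E η' ν') := by
  obtain ⟨m₁, h₁⟩ : ∃ m₁, a ≠ b → ∃ i < m₁, a i ≠ b i := by
    by_cases h : a = b
    · exact ⟨0, fun hc => absurd h hc⟩
    · obtain ⟨i, hi⟩ := Function.ne_iff.mp h
      exact ⟨i + 1, fun _ => ⟨i, Nat.lt_succ_self i, hi⟩⟩
  obtain ⟨m₂, h₂⟩ : ∃ m₂, ¬ E a b → ∀ η' ν' : ℕ → ℕ,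
      (∀ i < m₂, η' i = a i) → (∀ i < m₂, ν' i = b i) → ¬ E η' ν' := by
    by_cases h : E a b
    · exact ⟨0, fun hc => absurd h hc⟩
    · by_contra hc
      push_neg at hc
      choose η ν h1 h2 h3 using fun m => (hc m).2
      have ht : Filter.Tendsto (fun m => (η m, ν m)) Filter.atTop (nhds (a, b)) := by
        apply Filter.Tendsto.prodMk_nhds
        · rw [tendsto_pi_nhds]
          intro i
          refine (tendsto_const_nhds (x := a i)).congr' ?_
          filter_upwards [Filter.eventually_ge_atTop (i + 1)] with m hm
          exact (h1 m i (by omega)).symm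
        · rw [tendsto_pi_nhds]
          intro i
          refine (tendsto_const_nhds (x := b i)).congr' ?_
          filter_upwards [Filter.eventually_ge_atTop (i + 1)] with m hm
          exact (h2 m i (by omega)).symm
      exact h (hEclosed.mem_of_tendsto ht (Filter.Eventually.of_forall h3))
  refine ⟨max m₁ m₂, fun hab => ?_, fun hab η' ν' e1 e2 => ?_⟩
  · obtain ⟨i, hi, hne⟩ := h₁ hab
    exact ⟨i, lt_of_lt_of_le hi (le_max_left _ _), hne⟩
  · exact h₂ hab η' ν' (fun i hi => e1 i (lt_of_lt_of_le hi (le_max_right _ _)))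
      (fun i hi => e2 i (lt_of_lt_of_le hi (le_max_right _ _)))

/-- Every word lies in the subgroup generated by the letters appearing in it. -/
lemma mem_closure_support {α : Type*} (L : List (α × Bool)) :
    FreeGroup.mk L ∈ Subgroup.closure (FreeGroup.of '' {a | ∃ b, (a, b) ∈ L}) := by
  induction L with
  | nil =>
    have : FreeGroup.mk ([] : List (α × Bool)) = 1 := rfl
    rw [this]; exact one_mem _
  | cons x L ih =>
    rw [show x :: L = [x] ++ L from rfl, ← FreeGroup.mul_mk]
    refine mul_mem ?_ (Subgroup.closure_mono
      (Set.image_mono (fun a ha => ha.elim fun b hb => ⟨b, List.mem_cons_of_mem _ hb⟩)) ih)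
    obtain ⟨a, b⟩ := x
    cases b with
    | true => exact Subgroup.subset_closure ⟨a, ⟨true, List.mem_cons_self⟩, rfl⟩
    | false =>
      have : FreeGroup.mk [(a, false)] = (FreeGroup.of a)⁻¹ := by
        rw [show [(a, false)] = FreeGroup.invRev [(a, true)] by
          simp [FreeGroup.invRev], ← FreeGroup.inv_mk]
        rfl
      rw [this]
      exact inv_mem (Subgroup.subset_closure ⟨a, ⟨false, List.mem_cons_self⟩, rfl⟩)

lemma GraphProd.gen_pow {V : Type*} (E : V → V → Prop) (p : V → ℕ) (a : V) :
    GraphProd.gen E p a ^ p a = 1 := by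
  have h : FreeGroup.of a ^ p a ∈ Subgroup.normalClosure (graphProdRels E p) :=
    Subgroup.subset_normalClosure (Or.inl ⟨a, rfl⟩)
  have h2 : PresentedGroup.mk (graphProdRels E p) (FreeGroup.of a ^ p a) = 1 :=
    (QuotientGroup.eq_one_iff _).mpr h
  rw [map_pow] at h2
  exact h2

lemma GraphProd.gen_comm {V : Type*} (E : V → V → Prop) (p : V → ℕ) {a b : V}
    (h : E a b) :
    GraphProd.gen E p a * GraphProd.gen E p b
      = GraphProd.gen E p b * GraphProd.gen E p a := by
  have hmem : FreeGroup.of a * FreeGroup.of b * (FreeGroup.of a)⁻¹ * (FreeGroup.of b)⁻¹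
      ∈ Subgroup.normalClosure (graphProdRels E p) :=
    Subgroup.subset_normalClosure (Or.inr ⟨a, b, h, rfl⟩)
  have h2 : PresentedGroup.mk (graphProdRels E p)
      (FreeGroup.of a * FreeGroup.of b * (FreeGroup.of a)⁻¹ * (FreeGroup.of b)⁻¹) = 1 :=
    (QuotientGroup.eq_one_iff _).mpr hmem
  simp only [map_mul, map_inv] at h2
  exact commutatorElement_eq_one_iff_mul_comm.mp h2
/-- The restriction homomorphisms `π_n : G(Γ, 𝔭) → G_n` (`0 < n < ω`) jointly
separate points: every `g ≠ e` has `π_n(g) ≠ e` for some `0 < n`; equivalently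
`⨅_{0 < n} ker π_n = {e}`. -/
theorem restriction_homs_separate_points
    (E : (ℕ → ℕ) → (ℕ → ℕ) → Prop) (hEsym : Symmetric E)
    (hEclosed : IsClosed {q : (ℕ → ℕ) × (ℕ → ℕ) | E q.1 q.2})
    (p : (ℕ → ℕ) → ℕ) (hp : ∀ η, p η ≠ 0 → IsPrimePow (p η))
    (hdep : ∀ η ν : ℕ → ℕ, η 0 = ν 0 → p η = p ν)
    (π : ∀ n : ℕ, GraphProd E p →* GraphProd (En E n) (pn p n))
    (hπ : ∀ n : ℕ, 0 < n → ∀ η : ℕ → ℕ,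
      π n (GraphProd.gen E p η) = GraphProd.gen (En E n) (pn p n) (res n η)) :
    (∀ g : GraphProd E p, g ≠ 1 → ∃ n : ℕ, 0 < n ∧ π n g ≠ 1) ∧
    (⨅ (n : ℕ) (_ : 0 < n), (π n).ker) = ⊥ := by
  classical
  have main : ∀ g : GraphProd E p, g ≠ 1 → ∃ n : ℕ, 0 < n ∧ π n g ≠ 1 := by
    intro g hg
    obtain ⟨w, hwg⟩ := PresentedGroup.mk_surjective (graphProdRels E p) g
    set L : List ((ℕ → ℕ) × Bool) := w.toWord with hL
    set T : Set (ℕ → ℕ) := {a | ∃ b, (a, b) ∈ L} with hT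
    set S : Finset (ℕ → ℕ) := (L.map Prod.fst).toFinset with hS
    have hTS : ∀ a, a ∈ T → a ∈ S := by
      rintro a ⟨b, hb⟩
      rw [hS, List.mem_toFinset, List.mem_map]
      exact ⟨(a, b), hb, rfl⟩
    choose m hm1 hm2 using fun a b => exists_sep E hEclosed a b
    set n : ℕ := 1 + S.sup (fun a => S.sup (fun b => m a b)) with hn'
    have hn : 0 < n := by omega
    have hmn : ∀ a ∈ S, ∀ b ∈ S, m a b ≤ n := by
      intro a ha b hb
      calc m a b ≤ S.sup (fun b => m a b) := Finset.le_sup hb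
        _ ≤ S.sup (fun a => S.sup (fun b => m a b)) :=
            Finset.le_sup (f := fun a => S.sup (fun b => m a b)) ha
        _ ≤ n := by omega
    have hinj : ∀ a ∈ S, ∀ b ∈ S, res n a = res n b → a = b := by
      intro a ha b hb h
      by_contra hne
      obtain ⟨i, hi, hne'⟩ := hm1 a b hne
      exact hne' (congrFun h ⟨i, lt_of_lt_of_le hi (hmn a ha b hb)⟩)
    have hE : ∀ a ∈ S, ∀ b ∈ S, En E n (res n a) (res n b) → a = b ∨ E a b := by
      intro a ha b hb hen
      by_cases hab : a = b
      · exact Or.inl hab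
      refine Or.inr ?_
      by_contra hne'
      obtain ⟨η', ν', hE', h1, h2⟩ := hen
      exact hm2 a b hne' η' ν'
        (fun i hi => congrFun h1 ⟨i, lt_of_lt_of_le hi (hmn a ha b hb)⟩)
        (fun i hi => congrFun h2 ⟨i, lt_of_lt_of_le hi (hmn a ha b hb)⟩) hE'
    set f : (Fin n → ℕ) → GraphProd E p := fun μ =>
      if h : ∃ a, a ∈ S ∧ res n a = μ then GraphProd.gen E p h.choose else 1 with hf
    have hrel : ∀ r ∈ graphProdRels (En E n) (pn p n),
        FreeGroup.lift f r = 1 := by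
      rintro r (⟨a, rfl⟩ | ⟨a, b, hab, rfl⟩)
      · rw [map_pow, FreeGroup.lift_apply_of]
        by_cases h : ∃ a', a' ∈ S ∧ res n a' = a
        · rw [hf]
          simp only [dif_pos h]
          have hpc : pn p n a = p h.choose := by
            apply hdep
            have : (fun k => if hk : k < n then a ⟨k, hk⟩ else 0) 0 = a ⟨0, hn⟩ :=
              dif_pos hn
            show (fun k => if hk : k < n then a ⟨k, hk⟩ else 0) 0 = h.choose 0
            rw [this]
            exact (congrFun h.choose_spec.2 ⟨0, hn⟩).symm
          rw [hpc]
          exact GraphProd.gen_pow E p h.choose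
        · rw [hf]; simp only [dif_neg h, one_pow]
      · simp only [map_mul, map_inv, FreeGroup.lift_apply_of]
        have hcomm : f a * f b = f b * f a := by
          by_cases h1 : ∃ a', a' ∈ S ∧ res n a' = a
          · by_cases h2 : ∃ b', b' ∈ S ∧ res n b' = b
            · rw [hf]; simp only [dif_pos h1, dif_pos h2]
              rcases hE h1.choose h1.choose_spec.1 h2.choose h2.choose_spec.1
                (by rw [h1.choose_spec.2, h2.choose_spec.2]; exact hab) with heq | hEcd
              · rw [heq]
              · exact GraphProd.gen_comm E p hEcd
            · rw [hf]; simp only [dif_neg h2, one_mul, mul_one]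
          · rw [hf]; simp only [dif_neg h1, one_mul, mul_one]
        rw [hcomm]
        group
    set ψ : GraphProd (En E n) (pn p n) →* GraphProd E p :=
      PresentedGroup.toGroup hrel with hψ
    set θ : GraphProd E p →* GraphProd E p := ψ.comp (π n) with hθ
    have hgen : ∀ a ∈ T, θ (GraphProd.gen E p a) = GraphProd.gen E p a := by
      intro a ha
      have e1 : θ (GraphProd.gen E p a)
          = ψ (GraphProd.gen (En E n) (pn p n) (res n a)) := by
        rw [hθ, MonoidHom.comp_apply, hπ n hn a]
      rw [e1]
      have e2 : ψ (GraphProd.gen (En E n) (pn p n) (res n a)) = f (res n a) :=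
        PresentedGroup.toGroup.of hrel
      rw [e2]
      have hex : ∃ a', a' ∈ S ∧ res n a' = res n a := ⟨a, hTS a ha, rfl⟩
      rw [hf]
      simp only [dif_pos hex]
      exact congrArg _ (hinj hex.choose hex.choose_spec.1 a (hTS a ha)
        hex.choose_spec.2)
    have hw : w ∈ Subgroup.closure (FreeGroup.of '' T) := by
      have := mem_closure_support L
      rwa [hL, FreeGroup.mk_toWord] at this
    have hfix : θ g = g := by
      rw [← hwg]
      refine Subgroup.closure_induction
        (p := fun x _ => θ (PresentedGroup.mk (graphProdRels E p) x)
          = PresentedGroup.mk (graphProdRels E p) x) ?_ ?_ ?_ ?_ hw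
      · rintro x ⟨a, ha, rfl⟩
        exact hgen a ha
      · simp
      · intro x y _ _ ihx ihy
        rw [map_mul, map_mul, ihx, ihy]
      · intro x _ ihx
        rw [map_inv, map_inv, ihx]
    refine ⟨n, hn, fun hcon => hg ?_⟩
    rw [← hfix, hθ, MonoidHom.comp_apply, hcon, map_one]
  refine ⟨main, ?_⟩
  rw [Subgroup.eq_bot_iff_forall]
  intro x hx
  by_contra hne
  obtain ⟨n, hn, hne'⟩ := main x hne
  exact hne' (MonoidHom.mem_ker.mp (Subgroup.mem_iInf.mp
    (Subgroup.mem_iInf.mp hx n) hn))
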